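/- Let P be a real symmetric positive definite n×n matrix, η ∈ (0,1], and M a real n×n matrix with Mᵀ P M ⪯ (1−η) P. Then for every integer k ≥ 0, ‖M^k‖₂ ≤ √(λ_max(P)/λ_min(P)) · (1−η)^{k/2}, where λ_max(P) and λ_min(P) are the largest and smallest eigenvalues of P. -/

import Mathlib

open Matrix MeasureTheory ProbabilityTheory Filter

/-- Frobenius norm of a real matrix. -/
noncomputable def frob {α β : Type*} [Fintype α] [Fintype β] (A : Matrix α β ℝ) : ℝ :=
  Real.sqrt (∑ i, ∑ j, (A i j) ^ 2)

/-- Spectral norm (largest singular value) of a real matrix. -/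
noncomputable def spec {α β : Type*} [Fintype α] [Fintype β] [DecidableEq β]
    (A : Matrix α β ℝ) : ℝ :=
  ‖LinearMap.toContinuousLinearMap (Matrix.toEuclideanLin A)‖

/-- The positive semidefinite square root of a positive semidefinite real matrix
(junk value `0` if the matrix is not positive semidefinite). -/
noncomputable def msqrt {α : Type*} [Fintype α] [DecidableEq α]
    (M : Matrix α α ℝ) : Matrix α α ℝ :=
  open scoped Classical in
  if h : M.PosSemidef then
    h.1.eigenvectorUnitary.1 * diagonal ((↑) ∘ (Real.sqrt ∘ h.1.eigenvalues)) *
      (star h.1.eigenvectorUnitary : Matrix α α ℝ)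
  else 0

/-- Euclidean norm of a real vector. -/
noncomputable def vnorm {α : Type*} [Fintype α] (v : α → ℝ) : ℝ :=
  Real.sqrt (∑ i, (v i) ^ 2)

lemma aux_sqrt_pow {a : ℝ} (ha : 0 ≤ a) (k : ℕ) : Real.sqrt (a ^ k) = Real.sqrt a ^ k := by
  induction k with
  | zero => simp
  | succ k ih => rw [pow_succ, pow_succ, Real.sqrt_mul (pow_nonneg ha k), ih]

lemma aux_psd_smul {n : ℕ} {A : Matrix (Fin n) (Fin n) ℝ} (hA : A.PosSemidef) {c : ℝ} (hc : 0 ≤ c) :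
    (c • A).PosSemidef := by
  refine .of_dotProduct_mulVec_nonneg (by simp [Matrix.IsHermitian, Matrix.conjTranspose_smul,
    ← Matrix.conjTranspose_eq_transpose_of_trivial, hA.1.eq]) fun x => ?_
  rw [Matrix.smul_mulVec, dotProduct_smul, smul_eq_mul]
  exact mul_nonneg hc (hA.dotProduct_mulVec_nonneg x)

lemma aux_key {n : ℕ} (P M : Matrix (Fin n) (Fin n) ℝ) (η : ℝ)
    (hη1 : η ≤ 1) (hM : ((1 - η) • P - Mᵀ * P * M).PosSemidef) :
    ∀ k : ℕ, (((1 - η) ^ k) • P - (M ^ k)ᵀ * P * (M ^ k)).PosSemidef := by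
  intro k
  induction k with
  | zero => simpa using Matrix.PosSemidef.zero
  | succ k ih =>
    have h2 : ((M ^ k)ᵀ * ((1 - η) • P - Mᵀ * P * M) * (M ^ k)).PosSemidef := by
      simpa using hM.conjTranspose_mul_mul_same (M ^ k)
    have h3 := aux_psd_smul ih (by linarith : (0:ℝ) ≤ 1 - η)
    have heq : ((1 - η) ^ (k+1)) • P - (M ^ (k+1))ᵀ * P * (M ^ (k+1)) =
        (1 - η) • (((1 - η) ^ k) • P - (M ^ k)ᵀ * P * (M ^ k))
          + (M ^ k)ᵀ * ((1 - η) • P - Mᵀ * P * M) * (M ^ k) := by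
      rw [pow_succ' M, pow_succ]
      simp only [Matrix.transpose_mul, Matrix.mul_sub, Matrix.sub_mul, smul_sub, smul_smul,
        Matrix.mul_smul, Matrix.smul_mul, Matrix.mul_assoc]
      module
    rw [heq]
    exact h3.add h2

lemma aux_dotProduct_sum {n m : ℕ} (v : Fin n → ℝ) (f : Fin m → Fin n → ℝ) :
    v ⬝ᵥ (∑ i, f i) = ∑ i, v ⬝ᵥ f i := by
  simp only [dotProduct, Finset.sum_apply, Finset.mul_sum]
  exact Finset.sum_comm

lemma aux_quad_eq {n : ℕ} {A : Matrix (Fin n) (Fin n) ℝ} (hA : A.IsHermitian)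
    (x : EuclideanSpace ℝ (Fin n)) :
    (x : Fin n → ℝ) ⬝ᵥ A *ᵥ x = ∑ i, hA.eigenvalues i * (hA.eigenvectorBasis.repr x i) ^ 2 := by
  set b := hA.eigenvectorBasis with hb
  have hx : (x : Fin n → ℝ) = ∑ i, b.repr x i • ⇑(b i) := by
    conv_lhs => rw [← b.sum_repr x]
    simp [Finset.sum_apply]
  have hdot : ∀ i, (x : Fin n → ℝ) ⬝ᵥ ⇑(b i) = b.repr x i := by
    intro i
    rw [b.repr_apply_apply, real_inner_comm]
    simp [PiLp.inner_apply, dotProduct, mul_comm]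
  have hmv : A *ᵥ (∑ i, b.repr x i • ⇑(b i)) = ∑ i, b.repr x i • (hA.eigenvalues i • ⇑(b i)) := by
    rw [← Matrix.mulVecLin_apply, map_sum]
    simp only [LinearMap.map_smul, Matrix.mulVecLin_apply, hb, hA.mulVec_eigenvectorBasis]
  conv_lhs => rw [hx]
  rw [hmv, ← hx, aux_dotProduct_sum]
  refine Finset.sum_congr rfl fun i _ => ?_
  rw [smul_smul, dotProduct_smul, hdot i, smul_eq_mul]
  ring

lemma aux_repr_sq {n : ℕ} (b : OrthonormalBasis (Fin n) ℝ (EuclideanSpace ℝ (Fin n)))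
    (x : EuclideanSpace ℝ (Fin n)) :
    ∑ i, (b.repr x i) ^ 2 = ∑ i, (x i) ^ 2 := by
  have h := b.repr.inner_map_map x x
  simp only [PiLp.inner_apply, RCLike.inner_apply, conj_trivial] at h
  simpa [sq] using h

lemma aux_quad_decay {n : ℕ} (P T : Matrix (Fin n) (Fin n) ℝ) (c : ℝ)
    (h : (c • P - Tᵀ * P * T).PosSemidef) (x : Fin n → ℝ) :
    (T *ᵥ x) ⬝ᵥ P *ᵥ (T *ᵥ x) ≤ c * (x ⬝ᵥ P *ᵥ x) := by
  have h0 := h.dotProduct_mulVec_nonneg x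
  rw [star_trivial, Matrix.sub_mulVec, dotProduct_sub, Matrix.smul_mulVec,
    dotProduct_smul, smul_eq_mul] at h0
  have h1 : x ⬝ᵥ (Tᵀ * P * T) *ᵥ x = (T *ᵥ x) ⬝ᵥ P *ᵥ (T *ᵥ x) := by
    rw [← Matrix.mulVec_mulVec, ← Matrix.mulVec_mulVec, Matrix.dotProduct_mulVec,
      Matrix.vecMul_transpose]
  rw [h1] at h0
  linarith

theorem lyapunov_decay_bound {n : ℕ} (P M : Matrix (Fin n) (Fin n) ℝ) (η : ℝ)
    (hP : P.PosDef) (hη : 0 < η) (hη1 : η ≤ 1)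
    (hM : ((1 - η) • P - Mᵀ * P * M).PosSemidef) :
    ∀ k : ℕ, spec (M ^ k) ≤
      Real.sqrt ((⨆ i, hP.isHermitian.eigenvalues i) / (⨅ i, hP.isHermitian.eigenvalues i)) *
        Real.sqrt (1 - η) ^ k := by
  intro k
  set a := ⨅ i, hP.isHermitian.eigenvalues i with ha
  set b := ⨆ i, hP.isHermitian.eigenvalues i with hbdef
  have hC : 0 ≤ Real.sqrt (b / a) * Real.sqrt (1 - η) ^ k :=
    mul_nonneg (Real.sqrt_nonneg _) (pow_nonneg (Real.sqrt_nonneg _) k)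
  rw [spec]
  refine ContinuousLinearMap.opNorm_le_bound _ hC fun x => ?_
  rcases Nat.eq_zero_or_pos n with hn | hn
  · subst hn
    have : (LinearMap.toContinuousLinearMap (Matrix.toEuclideanLin (M ^ k))) x = 0 :=
      Subsingleton.elim _ _
    rw [this, norm_zero]
    exact mul_nonneg hC (norm_nonneg x)
  · haveI : Nonempty (Fin n) := ⟨⟨0, hn⟩⟩
    set y : Fin n → ℝ := (M ^ k) *ᵥ (x : Fin n → ℝ) with hy
    have h1η : (0:ℝ) ≤ 1 - η := by linarith
    -- eigenvalue bounds
    have hbdd : BddAbove (Set.range hP.isHermitian.eigenvalues) :=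
      Set.Finite.bddAbove (Set.finite_range _)
    have hbdd' : BddBelow (Set.range hP.isHermitian.eigenvalues) :=
      Set.Finite.bddBelow (Set.finite_range _)
    have hapos : 0 < a := by
      obtain ⟨i0, hi0⟩ := exists_eq_ciInf_of_finite (f := hP.isHermitian.eigenvalues)
      rw [ha, ← hi0]; exact hP.eigenvalues_pos i0
    have habnn : 0 ≤ b := le_trans hapos.le (le_trans (ciInf_le hbdd' (Classical.arbitrary _))
      (le_ciSup hbdd _))
    -- quadratic form bounds
    have hlow : ∀ z : EuclideanSpace ℝ (Fin n),
        a * ∑ i, (z i) ^ 2 ≤ (z : Fin n → ℝ) ⬝ᵥ P *ᵥ z := by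
      intro z
      rw [aux_quad_eq hP.isHermitian z, ← aux_repr_sq hP.isHermitian.eigenvectorBasis z,
        Finset.mul_sum]
      exact Finset.sum_le_sum fun i _ =>
        mul_le_mul_of_nonneg_right (ciInf_le hbdd' i) (sq_nonneg _)
    have hhigh : ∀ z : EuclideanSpace ℝ (Fin n),
        (z : Fin n → ℝ) ⬝ᵥ P *ᵥ z ≤ b * ∑ i, (z i) ^ 2 := by
      intro z
      rw [aux_quad_eq hP.isHermitian z, ← aux_repr_sq hP.isHermitian.eigenvectorBasis z,
        Finset.mul_sum]
      exact Finset.sum_le_sum fun i _ =>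
        mul_le_mul_of_nonneg_right (le_ciSup hbdd i) (sq_nonneg _)
    -- decay
    have hdecay := aux_quad_decay P (M ^ k) ((1 - η) ^ k)
      (aux_key P M η hη1 hM k) (x : Fin n → ℝ)
    -- combine
    have hchain : a * ∑ i, (y i) ^ 2 ≤ (1 - η) ^ k * (b * ∑ i, (x i) ^ 2) := by
      calc a * ∑ i, (y i) ^ 2 ≤ y ⬝ᵥ P *ᵥ y := hlow ((WithLp.equiv 2 _).symm y)
        _ ≤ (1 - η) ^ k * ((x : Fin n → ℝ) ⬝ᵥ P *ᵥ x) := hdecay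
        _ ≤ (1 - η) ^ k * (b * ∑ i, (x i) ^ 2) :=
            mul_le_mul_of_nonneg_left (hhigh x) (pow_nonneg h1η k)
    have hsum : ∑ i, (y i) ^ 2 ≤ (b / a) * ((1 - η) ^ k * ∑ i, (x i) ^ 2) := by
      rw [div_mul_eq_mul_div, le_div_iff₀ hapos]
      nlinarith [hchain]
    -- norms
    have hnormTx : ‖(LinearMap.toContinuousLinearMap (Matrix.toEuclideanLin (M ^ k))) x‖
        = Real.sqrt (∑ i, (y i) ^ 2) := by
      rw [LinearMap.coe_toContinuousLinearMap', EuclideanSpace.norm_eq]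
      congr 1
      refine Finset.sum_congr rfl fun i _ => ?_
      rw [Matrix.toEuclideanLin_apply]
      simp only [hy, Real.norm_eq_abs, sq_abs]
    have hnormx : ‖x‖ = Real.sqrt (∑ i, (x i) ^ 2) := by
      rw [EuclideanSpace.norm_eq]
      congr 1
      exact Finset.sum_congr rfl fun i _ => by rw [Real.norm_eq_abs, sq_abs]
    rw [hnormTx, hnormx]
    calc Real.sqrt (∑ i, (y i) ^ 2)
        ≤ Real.sqrt ((b / a) * ((1 - η) ^ k * ∑ i, (x i) ^ 2)) := Real.sqrt_le_sqrt hsum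
      _ = Real.sqrt (b / a) * (Real.sqrt ((1 - η) ^ k) * Real.sqrt (∑ i, (x i) ^ 2)) := by
          rw [Real.sqrt_mul (div_nonneg habnn hapos.le),
            Real.sqrt_mul (pow_nonneg h1η k)]
      _ = Real.sqrt (b / a) * Real.sqrt (1 - η) ^ k * Real.sqrt (∑ i, (x i) ^ 2) := by
          rw [aux_sqrt_pow h1η k]; ring
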